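/- If a Boolean algebra B of subsets of a set S has a fragmentation {C_n} such that each C_n has a positive intersection number, then B carries a strictly positive finitely additive measure. -/

import Mathlib

open Pointwise


universe u

/-- A Boolean algebra of subsets of `S`: a collection of subsets containing
`∅` and closed under union and complement. -/
structure IsSetBooleanAlgebra {S : Type u} (B : Set (Set S)) : Prop where
  empty_mem : ∅ ∈ B
  union_mem : ∀ a b : Set S, a ∈ B → b ∈ B → a ∪ b ∈ B
  compl_mem : ∀ a : Set S, a ∈ B → aᶜ ∈ B

/-- A finitely additive (probability) measure on a Boolean set algebra `B`. -/
structure IsFinAddMeasureOn {S : Type u} (B : Set (Set S)) (m : Set S → ℝ) : Prop where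
  map_empty : m ∅ = 0
  map_univ : m Set.univ = 1
  nonneg : ∀ a ∈ B, 0 ≤ m a
  mono : ∀ a ∈ B, ∀ b ∈ B, a ⊆ b → m a ≤ m b
  add : ∀ a ∈ B, ∀ b ∈ B, a ∩ b = ∅ → m (a ∪ b) = m a + m b

/-- The largest size of a set `J ⊆ {1,…,n}` of indices such that
`⋂_{i ∈ J} c_i` is nonempty. -/
noncomputable def maxInterCard {S : Type u} (n : ℕ) (c : Fin n → Set S) : ℕ :=
  sSup {k : ℕ | ∃ J : Finset (Fin n), J.card = k ∧ (⋂ i ∈ J, c i).Nonempty}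

/-- The number `κ_s = k/n` associated to the finite sequence
`s = ⟨c_1,…,c_n⟩`, where `k` is the largest size of a set `J ⊆ {1,…,n}` with
`⋂_{i ∈ J} c_i ≠ ∅`. The intersection number of a family `C` is the infimum
of `kappa n c` over all finite sequences `c` in `C`. -/
noncomputable def kappa {S : Type u} (n : ℕ) (c : Fin n → Set S) : ℝ :=
  (maxInterCard n c : ℝ) / (n : ℝ)

/-- `κ` is a lower bound for the intersection number of `C`, i.e.
`κ ≤ κ_s` for every finite sequence `s` in `C`. (The intersection number of
`C` is at least `κ`.) -/
def InterNumberLB {S : Type u} (C : Set (Set S)) (κ : ℝ) : Prop :=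
  ∀ n : ℕ, 0 < n → ∀ c : Fin n → Set S, (∀ i, c i ∈ C) → κ ≤ kappa n c

/-- A fragmentation of a Boolean set algebra `B`: an increasing sequence of
subsets of `B ∖ {∅}`, each upward closed in `B`, whose union is `B ∖ {∅}`. -/
structure IsSetFragmentation {S : Type u} (B : Set (Set S)) (C : ℕ → Set (Set S)) : Prop where
  mono : ∀ n, C n ⊆ C (n + 1)
  subset : ∀ n, C n ⊆ B \ {∅}
  upward : ∀ n : ℕ, ∀ a ∈ C n, ∀ b ∈ B, a ⊆ b → b ∈ C n
  covers : ∀ a ∈ B, a ≠ ∅ → ∃ n, a ∈ C n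

open Classical in
noncomputable def chiFn {S : Type u} (a : Set S) : S → ℝ := fun x => if x ∈ a then 1 else 0

lemma chiFn_nonneg {S : Type u} (a : Set S) (x : S) : 0 ≤ chiFn a x := by
  unfold chiFn; split <;> norm_num

lemma chiFn_le_one {S : Type u} (a : Set S) (x : S) : chiFn a x ≤ 1 := by
  unfold chiFn; split <;> norm_num

lemma abs_chiFn_le_one {S : Type u} (a : Set S) (x : S) : |chiFn a x| ≤ 1 := by
  rw [abs_le]; exact ⟨by linarith [chiFn_nonneg a x], chiFn_le_one a x⟩

lemma maxInterCard_spec {S : Type u} [Nonempty S] (n : ℕ) (c : Fin n → Set S) :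
    ∃ J : Finset (Fin n), J.card = maxInterCard n c ∧ (⋂ i ∈ J, c i).Nonempty := by
  have hne : {k : ℕ | ∃ J : Finset (Fin n), J.card = k ∧ (⋂ i ∈ J, c i).Nonempty}.Nonempty := by
    refine ⟨0, ∅, rfl, ?_⟩
    simp [Set.univ_nonempty]
  have hbdd : BddAbove {k : ℕ | ∃ J : Finset (Fin n), J.card = k ∧ (⋂ i ∈ J, c i).Nonempty} := by
    refine ⟨n, fun k hk => ?_⟩
    obtain ⟨J, hJ, -⟩ := hk
    simpa [← hJ] using (Finset.card_le_univ J).trans_eq (by simp)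
  exact Nat.sSup_mem hne hbdd

lemma intCase {S : Type u} [Nonempty S] {C : Set (Set S)} {κ : ℝ}
    (h : InterNumberLB C κ) {n : ℕ} (k : Fin n → ℕ) (a : Fin n → Set S)
    (ha : ∀ i, a i ∈ C) (hN : 0 < ∑ i, k i) :
    ∃ x : S, κ * (∑ i, (k i : ℝ)) ≤ ∑ i, (k i : ℝ) * chiFn (a i) x := by
  classical
  set N := ∑ i, k i with hNdef
  have hcard : Fintype.card ((i : Fin n) × Fin (k i)) = Fintype.card (Fin N) := by
    simp [hNdef]
  let e : ((i : Fin n) × Fin (k i)) ≃ Fin N := Fintype.equivOfCardEq hcard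
  let c : Fin N → Set S := fun j => a (e.symm j).1
  have hc : ∀ j, c j ∈ C := fun j => ha _
  have hk := h N hN c hc
  have hNpos : (0:ℝ) < (N:ℝ) := by exact_mod_cast hN
  rw [kappa, le_div_iff₀ hNpos] at hk
  obtain ⟨J, hJcard, x, hx⟩ := maxInterCard_spec N c
  refine ⟨x, ?_⟩
  have hxmem : ∀ j ∈ J, x ∈ c j := fun j hj => Set.mem_iInter₂.1 hx j hj
  have hsub : J ⊆ Finset.univ.filter (fun j => x ∈ c j) :=
    fun j hj => Finset.mem_filter.2 ⟨Finset.mem_univ _, hxmem j hj⟩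
  have hcount : (Finset.univ.filter (fun j : Fin N => x ∈ c j)).card
      = ∑ i, if x ∈ a i then k i else 0 := by
    have h1 : (Finset.univ.filter (fun j : Fin N => x ∈ c j)).card
        = Fintype.card {j : Fin N // x ∈ c j} := (Fintype.card_subtype _).symm
    have h2 : Fintype.card {j : Fin N // x ∈ c j}
        = Fintype.card {p : (i : Fin n) × Fin (k i) // x ∈ a p.1} :=
      Fintype.card_congr (e.symm.subtypeEquiv (fun j => Iff.rfl))
    rw [h1, h2, Fintype.card_subtype, Finset.card_filter, ← Finset.univ_sigma_univ,
      Finset.sum_sigma]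
    refine Finset.sum_congr rfl fun i _ => ?_
    by_cases hxi : x ∈ a i <;> simp [hxi]
  have hJle : (J.card : ℝ) ≤ ((Finset.univ.filter fun j : Fin N => x ∈ c j).card : ℝ) := by
    exact_mod_cast Finset.card_le_card hsub
  have heq : ∑ i, (k i : ℝ) * chiFn (a i) x
      = (((Finset.univ.filter fun j : Fin N => x ∈ c j).card : ℕ) : ℝ) := by
    rw [hcount]
    push_cast
    refine Finset.sum_congr rfl fun i _ => ?_
    by_cases hxi : x ∈ a i <;> simp [hxi, chiFn]
  have hN' : κ * (∑ i, (k i : ℝ)) = κ * N := by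
    rw [hNdef]; push_cast; ring
  rw [heq, hN']
  calc κ * (N:ℝ) ≤ (maxInterCard N c : ℝ) := hk
    _ = (J.card : ℝ) := by rw [hJcard]
    _ ≤ _ := hJle

lemma realCase {S : Type u} [Nonempty S] {C : Set (Set S)} {κ : ℝ} (hκ : 0 < κ)
    (h : InterNumberLB C κ) {n : ℕ} (lam : Fin n → ℝ) (a : Fin n → Set S)
    (ha : ∀ i, a i ∈ C) (hlam : ∀ i, 0 ≤ lam i) {ε : ℝ} (hε : 0 < ε) :
    ∃ x : S, κ * (∑ i, lam i) - ε ≤ ∑ i, lam i * chiFn (a i) x := by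
  classical
  obtain ⟨M, hM⟩ := exists_nat_gt (max 1 (κ * n / ε))
  have hM1 : (1:ℝ) ≤ M := le_of_lt (lt_of_le_of_lt (le_max_left _ _) hM)
  have hM0 : (0:ℝ) < M := lt_of_lt_of_le one_pos hM1
  have hMκ : κ * n / ε < M := lt_of_le_of_lt (le_max_right _ _) hM
  have hκnM : κ * n / M < ε := by
    rw [div_lt_iff₀ hM0]
    rw [div_lt_iff₀ hε] at hMκ
    nlinarith
  set k : Fin n → ℕ := fun i => ⌊(M:ℝ) * lam i⌋₊ with hkdef
  have hkle : ∀ i, (k i : ℝ) ≤ M * lam i := fun i =>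
    Nat.floor_le (mul_nonneg hM0.le (hlam i))
  have hklt : ∀ i, (M:ℝ) * lam i - 1 < (k i:ℝ) := fun i => Nat.sub_one_lt_floor _
  by_cases hN : 0 < ∑ i, k i
  · obtain ⟨x, hx⟩ := intCase h k a ha hN
    refine ⟨x, ?_⟩
    have h1 : (1/(M:ℝ)) * ∑ i, (k i:ℝ) * chiFn (a i) x ≤ ∑ i, lam i * chiFn (a i) x := by
      rw [Finset.mul_sum]
      refine Finset.sum_le_sum fun i _ => ?_
      have hc := chiFn_nonneg (a i) x
      have h2 : (1/(M:ℝ)) * ((k i:ℝ) * chiFn (a i) x) = ((k i:ℝ)/M) * chiFn (a i) x := by ring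
      rw [h2]
      refine mul_le_mul_of_nonneg_right ?_ hc
      rw [div_le_iff₀ hM0]
      calc (k i : ℝ) ≤ M * lam i := hkle i
        _ = lam i * M := mul_comm _ _
    have h3 : (1/(M:ℝ)) * (κ * ∑ i, (k i:ℝ)) ≤ (1/(M:ℝ)) * ∑ i, (k i:ℝ) * chiFn (a i) x :=
      mul_le_mul_of_nonneg_left hx (by positivity)
    have hsum : (M:ℝ) * (∑ i, lam i) - n ≤ ∑ i, (k i:ℝ) := by
      have hs := Finset.sum_le_sum (fun i (_ : i ∈ Finset.univ) => le_of_lt (hklt i))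
      calc (M:ℝ) * (∑ i, lam i) - n = ∑ i : Fin n, ((M:ℝ) * lam i - 1) := by
            rw [Finset.sum_sub_distrib, ← Finset.mul_sum]; simp
        _ ≤ ∑ i, (k i:ℝ) := hs
    have h4 : κ * (∑ i, lam i) - κ * n / M ≤ (1/(M:ℝ)) * (κ * ∑ i, (k i:ℝ)) := by
      have h5 : κ * ((M:ℝ) * (∑ i, lam i) - n) ≤ κ * ∑ i, (k i:ℝ) :=
        mul_le_mul_of_nonneg_left hsum hκ.le
      have h6 : (1/(M:ℝ)) * (κ * ((M:ℝ) * (∑ i, lam i) - n))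
          ≤ (1/(M:ℝ)) * (κ * ∑ i, (k i:ℝ)) := mul_le_mul_of_nonneg_left h5 (by positivity)
      calc κ * (∑ i, lam i) - κ * n / M
          = (1/(M:ℝ)) * (κ * ((M:ℝ) * (∑ i, lam i) - n)) := by field_simp
        _ ≤ _ := h6
    linarith [hκnM]
  · push_neg at hN
    have hall : ∀ i, k i = 0 := by
      intro i
      have := Finset.sum_eq_zero_iff.1 (Nat.le_zero.1 hN) i (Finset.mem_univ i)
      exact this
    have hlamlt : ∀ i, lam i ≤ 1 / M := by
      intro i
      have h7 := hklt i
      rw [hall i] at h7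
      push_cast at h7
      rw [le_div_iff₀ hM0]
      nlinarith
    have hsum : ∑ i, lam i ≤ n / M := by
      calc ∑ i, lam i ≤ ∑ _i : Fin n, 1/(M:ℝ) := Finset.sum_le_sum fun i _ => hlamlt i
        _ = n / M := by rw [Finset.sum_const]; simp; ring
    obtain ⟨x⟩ := ‹Nonempty S›
    refine ⟨x, ?_⟩
    have hpos : 0 ≤ ∑ i, lam i * chiFn (a i) x :=
      Finset.sum_nonneg fun i _ => mul_nonneg (hlam i) (chiFn_nonneg _ _)
    have h8 : κ * (∑ i, lam i) ≤ κ * (n/M) := mul_le_mul_of_nonneg_left hsum hκ.le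
    have h9 : κ * ((n:ℝ)/M) = κ * n / M := by ring
    linarith [hκnM]

def bddFns (S : Type u) : Submodule ℝ (S → ℝ) where
  carrier := {f | ∃ M : ℝ, ∀ x, |f x| ≤ M}
  add_mem' := by
    rintro f g ⟨Mf, hf⟩ ⟨Mg, hg⟩
    exact ⟨Mf + Mg, fun x => (abs_add_le _ _).trans (add_le_add (hf x) (hg x))⟩
  zero_mem' := ⟨0, fun x => by simp⟩
  smul_mem' := by
    rintro c f ⟨M, hf⟩
    exact ⟨|c| * M, fun x => by
      rw [Pi.smul_apply, smul_eq_mul, abs_mul]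
      exact mul_le_mul_of_nonneg_left (hf x) (abs_nonneg c)⟩

lemma bddFns_bddAbove {S : Type u} (f : bddFns S) : BddAbove (Set.range (f : S → ℝ)) := by
  obtain ⟨M, hM⟩ := f.2
  exact ⟨M, by rintro t ⟨x, rfl⟩; exact (abs_le.1 (hM x)).2⟩

lemma keyMeasure {S : Type u} [Nonempty S] (C : Set (Set S)) (κ : ℝ) (hκ : 0 < κ)
    (h : InterNumberLB C κ) :
    ∃ m : Set S → ℝ, m ∅ = 0 ∧ m Set.univ = 1 ∧ (∀ a : Set S, 0 ≤ m a) ∧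
      (∀ a b : Set S, a ⊆ b → m a ≤ m b) ∧
      (∀ a b : Set S, a ∩ b = ∅ → m (a ∪ b) = m a + m b) ∧
      (∀ a ∈ C, κ ≤ m a) := by
  classical
  -- elements of the bounded function space
  let indV : Set S → bddFns S := fun b => ⟨chiFn b, 1, fun x => abs_chiFn_le_one b x⟩
  let one : bddFns S := ⟨fun _ => 1, 1, fun x => by simp⟩
  have hone : one ≠ 0 := by
    intro h0
    obtain ⟨x⟩ := ‹Nonempty S›
    have := congrFun (congrArg (Subtype.val) h0) x
    exact one_ne_zero (α := ℝ) this
  -- the sup functional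
  let sup : bddFns S → ℝ := fun f => ⨆ x, (f : S → ℝ) x
  have hsup_le : ∀ (f : bddFns S) (t : ℝ), (∀ x, (f : S → ℝ) x ≤ t) → sup f ≤ t :=
    fun f t ht => ciSup_le ht
  have hle_sup : ∀ (f : bddFns S) (x : S), (f : S → ℝ) x ≤ sup f :=
    fun f x => le_ciSup (bddFns_bddAbove f) x
  have hsup_add : ∀ f g : bddFns S, sup (f + g) ≤ sup f + sup g := by
    intro f g
    refine hsup_le _ _ fun x => ?_
    have : ((f + g : bddFns S) : S → ℝ) x = (f : S → ℝ) x + (g : S → ℝ) x := rfl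
    rw [this]
    exact add_le_add (hle_sup f x) (hle_sup g x)
  -- the cone
  let G : Set (bddFns S) := { g | ∃ (n : ℕ) (a : Fin n → Set S) (lam : Fin n → ℝ),
    (∀ i, a i ∈ C) ∧ (∀ i, 0 ≤ lam i) ∧
    (g : S → ℝ) = fun x => ∑ i, lam i * (chiFn (a i) x - κ) }
  have hG0 : (0 : bddFns S) ∈ G := by
    refine ⟨0, Fin.elim0, Fin.elim0, fun i => i.elim0, fun i => i.elim0, ?_⟩
    funext x; simp
  have hGsmul : ∀ c : ℝ, 0 < c → ∀ g ∈ G, c • g ∈ G := by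
    rintro c hc g ⟨n, a, lam, ha, hlam, hg⟩
    refine ⟨n, a, fun i => c * lam i, ha, fun i => mul_nonneg hc.le (hlam i), ?_⟩
    funext x
    have : ((c • g : bddFns S) : S → ℝ) x = c * (g : S → ℝ) x := rfl
    rw [this, hg, Finset.mul_sum]
    exact Finset.sum_congr rfl fun i _ => by ring
  have hGadd : ∀ g₁ ∈ G, ∀ g₂ ∈ G, g₁ + g₂ ∈ G := by
    rintro g₁ ⟨n₁, a₁, lam₁, ha₁, hlam₁, hg₁⟩ g₂ ⟨n₂, a₂, lam₂, ha₂, hlam₂, hg₂⟩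
    refine ⟨n₁ + n₂, Fin.append a₁ a₂, Fin.append lam₁ lam₂, ?_, ?_, ?_⟩
    · intro i
      refine Fin.addCases (fun i => ?_) (fun i => ?_) i
      · rw [Fin.append_left]; exact ha₁ i
      · rw [Fin.append_right]; exact ha₂ i
    · intro i
      refine Fin.addCases (fun i => ?_) (fun i => ?_) i
      · rw [Fin.append_left]; exact hlam₁ i
      · rw [Fin.append_right]; exact hlam₂ i
    · funext x
      have hx : ((g₁ + g₂ : bddFns S) : S → ℝ) x = (g₁ : S → ℝ) x + (g₂ : S → ℝ) x := rfl
      rw [hx, hg₁, hg₂]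
      simp only []
      rw [Fin.sum_univ_add]
      simp [Fin.append_left, Fin.append_right]
  -- key positivity: elements of the cone have nonnegative sup
  have hGpos : ∀ g ∈ G, 0 ≤ sup g := by
    rintro g ⟨n, a, lam, ha, hlam, hg⟩
    by_contra hneg
    push_neg at hneg
    have hε0 : 0 < -sup g / 2 := by linarith
    obtain ⟨x, hx⟩ := realCase hκ h lam a ha hlam hε0
    have hgx : (g : S → ℝ) x = ∑ i, lam i * chiFn (a i) x - κ * ∑ i, lam i := by
      rw [hg]
      show ∑ i, lam i * (chiFn (a i) x - κ) = _
      rw [Finset.sum_congr rfl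
        (fun i _ => by ring :
          ∀ i ∈ Finset.univ, lam i * (chiFn (a i) x - κ) = lam i * chiFn (a i) x - κ * lam i)]
      rw [Finset.sum_sub_distrib, ← Finset.mul_sum]
    have hgx2 : sup g / 2 ≤ (g : S → ℝ) x := by rw [hgx]; linarith
    have := hle_sup g x
    linarith
  -- the sublinear functional
  let NS : bddFns S → Set ℝ := fun f => { t | ∃ g ∈ G, t = sup (f + g) }
  let N : bddFns S → ℝ := fun f => sInf (NS f)
  have hNSne : ∀ f, (NS f).Nonempty := fun f => ⟨sup (f + 0), 0, hG0, rfl⟩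
  have hNSbdd : ∀ f, BddBelow (NS f) := by
    intro f
    obtain ⟨M, hM⟩ := f.2
    refine ⟨-M, ?_⟩
    rintro t ⟨g, hgG, rfl⟩
    by_contra hlt
    push_neg at hlt
    -- sup (f+g) < -M, but f x ≥ -M and sup g ≥ 0
    have h1 : ∀ x, (g : S → ℝ) x ≤ sup (f + g) + M := by
      intro x
      have h2 : (f : S → ℝ) x + (g : S → ℝ) x ≤ sup (f + g) := hle_sup (f + g) x
      have h3 : -M ≤ (f : S → ℝ) x := (abs_le.1 (hM x)).1
      linarith
    have h4 : sup g ≤ sup (f + g) + M := hsup_le g _ h1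
    have h5 := hGpos g hgG
    linarith
  have hN_le : ∀ (f : bddFns S) (g : bddFns S), g ∈ G → N f ≤ sup (f + g) :=
    fun f g hg => csInf_le (hNSbdd f) ⟨g, hg, rfl⟩
  have hN_le_sup : ∀ f : bddFns S, N f ≤ sup f := by
    intro f
    have := hN_le f 0 hG0
    simpa using this
  have hN_hom : ∀ c : ℝ, 0 < c → ∀ f : bddFns S, N (c • f) = c * N f := by
    intro c hc f
    have hsmul_sup : ∀ hh : bddFns S, sup (c • hh) = c * sup hh := by
      intro hh
      show (⨆ x, ((c • hh : bddFns S) : S → ℝ) x) = c * ⨆ x, (hh : S → ℝ) x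
      rw [Real.mul_iSup_of_nonneg hc.le]
      rfl
    have himg : NS (c • f) = (fun t => c * t) '' NS f := by
      ext t
      constructor
      · rintro ⟨g, hgG, rfl⟩
        refine ⟨sup (f + c⁻¹ • g), ⟨c⁻¹ • g, hGsmul c⁻¹ (by positivity) g hgG, rfl⟩, ?_⟩
        have hrw : c • f + g = c • (f + c⁻¹ • g) := by
          rw [smul_add, smul_inv_smul₀ (ne_of_gt hc)]
        rw [hrw]
        exact (hsmul_sup _).symm
      · rintro ⟨t', ⟨g, hgG, rfl⟩, rfl⟩
        refine ⟨c • g, hGsmul c hc g hgG, ?_⟩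
        have hrw : c • f + c • g = c • (f + g) := (smul_add c f g).symm
        rw [hrw, hsmul_sup]
    show sInf (NS (c • f)) = c * sInf (NS f)
    rw [himg]
    have : (fun t => c * t) '' NS f = c • NS f := by
      ext t; simp [Set.mem_smul_set, smul_eq_mul]
    rw [this, Real.sInf_smul_of_nonneg hc.le, smul_eq_mul]
  have hN_add : ∀ f₁ f₂ : bddFns S, N (f₁ + f₂) ≤ N f₁ + N f₂ := by
    intro f₁ f₂
    refine le_of_forall_pos_le_add fun ε hε => ?_
    obtain ⟨t₁, ⟨g₁, hg₁, rfl⟩, ht₁⟩ := Real.lt_sInf_add_pos (hNSne f₁) (half_pos hε)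
    obtain ⟨t₂, ⟨g₂, hg₂, rfl⟩, ht₂⟩ := Real.lt_sInf_add_pos (hNSne f₂) (half_pos hε)
    have hg12 : g₁ + g₂ ∈ G := hGadd g₁ hg₁ g₂ hg₂
    have h1 : N (f₁ + f₂) ≤ sup (f₁ + f₂ + (g₁ + g₂)) := hN_le _ _ hg12
    have h2 : f₁ + f₂ + (g₁ + g₂) = (f₁ + g₁) + (f₂ + g₂) := by abel
    rw [h2] at h1
    have h3 := hsup_add (f₁ + g₁) (f₂ + g₂)
    have h4 : N f₁ = sInf (NS f₁) := rfl
    have h5 : N f₂ = sInf (NS f₂) := rfl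
    rw [h4, h5]
    linarith
  -- Hahn-Banach extension
  let fP : (bddFns S) →ₗ.[ℝ] ℝ := LinearPMap.mkSpanSingleton (K := ℝ) one 1 hone
  have hfP_dom : one ∈ fP.domain := Submodule.mem_span_singleton_self one
  have hfP_le : ∀ z : fP.domain, fP z ≤ N (z : bddFns S) := by
    rintro ⟨z, hz⟩
    obtain ⟨c, rfl⟩ := Submodule.mem_span_singleton.1 hz
    have happ : fP ⟨c • one, hz⟩ = c • (1 : ℝ) := by
      exact LinearPMap.mkSpanSingleton'_apply one (1 : ℝ) _ c hz
    rw [happ, smul_eq_mul, mul_one]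
    -- show c ≤ N (c • one)
    refine le_csInf (hNSne _) ?_
    rintro t ⟨g, hgG, rfl⟩
    -- sup (c • one + g) ≥ c + sup g ≥ c
    have h1 : ∀ x, c + (g : S → ℝ) x ≤ sup (c • one + g) := by
      intro x
      have h2 : ((c • one + g : bddFns S) : S → ℝ) x = c * 1 + (g : S → ℝ) x := rfl
      have := hle_sup (c • one + g) x
      rw [h2] at this
      linarith
    have h3 : sup g ≤ sup (c • one + g) - c := by
      refine hsup_le g _ fun x => ?_
      have := h1 x
      linarith
    have h4 := hGpos g hgG
    linarith
  obtain ⟨φ, hφeq, hφle⟩ := exists_extension_of_le_sublinear fP N hN_hom hN_add hfP_le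
  have hφone : φ one = 1 := by
    have h1 := hφeq ⟨one, hfP_dom⟩
    have h2 : fP ⟨one, hfP_dom⟩ = 1 := LinearPMap.mkSpanSingleton_apply ℝ ℝ hone 1
    rw [h1, h2]
  have hφ_nonpos : ∀ f : bddFns S, (∀ x, (f : S → ℝ) x ≤ 0) → φ f ≤ 0 :=
    fun f hf => (hφle f).trans ((hN_le_sup f).trans (hsup_le f 0 hf))
  refine ⟨fun b => φ (indV b), ?_, ?_, ?_, ?_, ?_, ?_⟩
  · -- m ∅ = 0
    show φ (indV ∅) = 0
    have h0 : indV ∅ = 0 := by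
      apply Subtype.ext
      funext x
      simp [indV, chiFn]
    rw [h0, map_zero]
  · -- m univ = 1
    show φ (indV Set.univ) = 1
    have h0 : indV Set.univ = one := by
      apply Subtype.ext
      funext x
      simp [indV, one, chiFn]
    rw [h0, hφone]
  · -- nonneg
    intro b
    show 0 ≤ φ (indV b)
    have h1 : φ (-(indV b)) ≤ 0 := by
      refine hφ_nonpos _ fun x => ?_
      have : ((-(indV b) : bddFns S) : S → ℝ) x = -(chiFn b x) := rfl
      rw [this]
      linarith [chiFn_nonneg b x]
    rw [map_neg] at h1
    linarith
  · -- mono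
    intro a b hab
    show φ (indV a) ≤ φ (indV b)
    have h1 : φ (indV a - indV b) ≤ 0 := by
      refine hφ_nonpos _ fun x => ?_
      have hx : ((indV a - indV b : bddFns S) : S → ℝ) x = chiFn a x - chiFn b x := rfl
      rw [hx]
      by_cases hxa : x ∈ a
      · have hxb : x ∈ b := hab hxa
        simp [chiFn, hxa, hxb]
      · simp [chiFn, hxa]
        exact chiFn_nonneg b x
    rw [map_sub] at h1
    linarith
  · -- additivity
    intro a b hab
    show φ (indV (a ∪ b)) = φ (indV a) + φ (indV b)
    have h0 : indV (a ∪ b) = indV a + indV b := by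
      apply Subtype.ext
      funext x
      have hx : ((indV a + indV b : bddFns S) : S → ℝ) x = chiFn a x + chiFn b x := rfl
      show chiFn (a ∪ b) x = _
      rw [hx]
      have hnot : ¬(x ∈ a ∧ x ∈ b) := by
        intro hmem
        exact Set.eq_empty_iff_forall_notMem.1 hab x ⟨hmem.1, hmem.2⟩
      by_cases hxa : x ∈ a
      · have hxb : x ∉ b := fun hxb => hnot ⟨hxa, hxb⟩
        simp [chiFn, hxa, hxb]
      · by_cases hxb : x ∈ b <;> simp [chiFn, hxa, hxb]
    rw [h0, map_add]
  · -- κ ≤ m a for a ∈ C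
    intro a haC
    show κ ≤ φ (indV a)
    have hgG : (indV a - κ • one : bddFns S) ∈ G := by
      refine ⟨1, fun _ => a, fun _ => 1, fun _ => haC, fun _ => zero_le_one, ?_⟩
      funext x
      have hx : ((indV a - κ • one : bddFns S) : S → ℝ) x = chiFn a x - κ * 1 := rfl
      rw [hx]
      simp
    have h1 : φ (κ • one - indV a) ≤ N (κ • one - indV a) := hφle _
    have h2 : N (κ • one - indV a) ≤ sup ((κ • one - indV a) + (indV a - κ • one)) :=
      hN_le _ _ hgG
    have h3 : (κ • one - indV a) + (indV a - κ • one) = 0 := by abel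
    have h4 : sup (0 : bddFns S) = 0 := by
      show (⨆ _ : S, (0:ℝ)) = 0
      exact ciSup_const
    rw [h3, h4] at h2
    have h5 : φ (κ • one - indV a) = κ - φ (indV a) := by
      rw [map_sub, map_smul, hφone, smul_eq_mul, mul_one]
    linarith

/-- If a Boolean set algebra `B` has a fragmentation `{C_n}` such that each
`C_n` has a positive intersection number, then `B` carries a strictly positive
finitely additive measure. -/
theorem strictlyPositive_finAddMeasure_of_fragmentation {S : Type u} [Nonempty S]
    (B : Set (Set S)) (hB : IsSetBooleanAlgebra B)
    (C : ℕ → Set (Set S)) (hfrag : IsSetFragmentation B C)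
    (hpos : ∀ n : ℕ, ∃ κ : ℝ, 0 < κ ∧ InterNumberLB (C n) κ) :
    ∃ m : Set S → ℝ, IsFinAddMeasureOn B m ∧ ∀ a ∈ B, a ≠ ∅ → 0 < m a := by
  classical
  choose κs hκs hLB using hpos
  have key := fun n => keyMeasure (C n) (κs n) (hκs n) (hLB n)
  choose ms h0 h1 hnn hmono hadd hC using key
  set w : ℕ → ℝ := fun n => (1/2)^(n+1) with hw
  have hw_pos : ∀ n, 0 < w n := fun n => by positivity
  have hw_sum : Summable w := by
    have h2 : Summable (fun n : ℕ => ((1:ℝ)/2)^n) :=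
      summable_geometric_of_lt_one (by norm_num) (by norm_num)
    have h3 := h2.mul_left ((1:ℝ)/2)
    refine h3.congr fun n => ?_
    simp [hw, pow_succ, mul_comm]
  have hw_tsum : ∑' n, w n = 1 := by
    have h2 : ∀ n : ℕ, w n = (1/2 : ℝ) * (1/2)^n := fun n => by
      simp [hw, pow_succ, mul_comm]
    calc ∑' n, w n = ∑' n : ℕ, (1/2 : ℝ) * (1/2)^n := tsum_congr h2
      _ = (1/2 : ℝ) * ∑' n : ℕ, ((1:ℝ)/2)^n := tsum_mul_left
      _ = 1 := by rw [tsum_geometric_two]; norm_num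
  have hle1 : ∀ n b, ms n b ≤ 1 := fun n b => by
    have := hmono n b Set.univ (Set.subset_univ b)
    rw [h1 n] at this
    exact this
  have hsum : ∀ b, Summable (fun n => w n * ms n b) := by
    intro b
    refine Summable.of_nonneg_of_le (fun n => mul_nonneg (hw_pos n).le (hnn n b))
      (fun n => ?_) hw_sum
    calc w n * ms n b ≤ w n * 1 := mul_le_mul_of_nonneg_left (hle1 n b) (hw_pos n).le
      _ = w n := mul_one _
  refine ⟨fun b => ∑' n, w n * ms n b, ⟨?_, ?_, ?_, ?_, ?_⟩, ?_⟩
  · simp only [h0, mul_zero]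
    exact tsum_zero
  · simp only [h1, mul_one]
    exact hw_tsum
  · intro a _
    exact tsum_nonneg fun n => mul_nonneg (hw_pos n).le (hnn n a)
  · intro a _ b _ hab
    exact Summable.tsum_le_tsum (fun n => mul_le_mul_of_nonneg_left (hmono n a b hab) (hw_pos n).le)
      (hsum a) (hsum b)
  · intro a _ b _ hab
    calc ∑' n, w n * ms n (a ∪ b) = ∑' n, (w n * ms n a + w n * ms n b) :=
          tsum_congr fun n => by rw [hadd n a b hab, mul_add]
      _ = (∑' n, w n * ms n a) + ∑' n, w n * ms n b := Summable.tsum_add (hsum a) (hsum b)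
  · intro a haB hane
    obtain ⟨n, hn⟩ := hfrag.covers a haB hane
    have h2 : κs n ≤ ms n a := hC n a hn
    have h3 : 0 < w n * ms n a := mul_pos (hw_pos n) (lt_of_lt_of_le (hκs n) h2)
    have h4 : w n * ms n a ≤ ∑' k, w k * ms k a :=
      Summable.le_tsum (hsum a) n fun j _ => mul_nonneg (hw_pos j).le (hnn j a)
    linarith
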